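/- Let N ≥ 2 and 1 < p < N, let x₀ ∈ ℝ^N and ρ > 0, and let f := ρ^{−p} · 1_{B_ρ(x₀)} be ρ^{−p} times the indicator of the open ball B_ρ(x₀). Then for every x ∈ ℝ^N with |x − x₀| ≥ ρ + ρ^{(N−p)/(N−1)}, one has W_p^f(x, ∞) ≤ ((p−1)/(N−p)) · ω_N^{1/(p−1)} · ρ^{(N−p)/(N−1)}, where ω_N is the Lebesgue volume of the unit ball in ℝ^N. -/

import Mathlib

open MeasureTheory Metric Set Filter
open scoped Topology

/-- The Wolff potential `W_{β,p}^f(x,∞)`. -/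
noncomputable def wolffTop (N : ℕ) (β p : ℝ) (f : EuclideanSpace ℝ (Fin N) → ℝ)
    (x : EuclideanSpace ℝ (Fin N)) : ℝ :=
  ∫ r in Set.Ioi (0:ℝ),
    (1/r) * ((r ^ (β*p - (N:ℝ)) * ∫ y in Metric.ball x r, f y) ^ (1/(p-1)))

/-- Display (A.3): for `f = ρ^{-p} 1_{B_ρ(x₀)}`, `1 < p < N`, and any point `x` with
`|x - x₀| ≥ ρ + ρ^{(N-p)/(N-1)}`, one has
`W_p^f(x, ∞) ≤ ((p-1)/(N-p)) ω_N^{1/(p-1)} ρ^{(N-p)/(N-1)}`. -/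
theorem wolffTop_far_estimate {N : ℕ} (hN : 2 ≤ N) (p : ℝ)
    (hp : 1 < p) (hpN : p < N)
    (x₀ : EuclideanSpace ℝ (Fin N)) (ρ : ℝ) (hρ : 0 < ρ)
    (x : EuclideanSpace ℝ (Fin N))
    (hx : ρ + ρ ^ (((N:ℝ)-p)/((N:ℝ)-1)) ≤ ‖x - x₀‖) :
    wolffTop N 1 p (fun y => ρ ^ (-p) * (ball x₀ ρ).indicator (fun _ => (1:ℝ)) y) x
      ≤ ((p-1)/((N:ℝ)-p))
          * ((volume (ball (0 : EuclideanSpace ℝ (Fin N)) 1)).toReal) ^ (1/(p-1))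
          * ρ ^ (((N:ℝ)-p)/((N:ℝ)-1)) := by
  have hN1 : (1:ℝ) < N := lt_trans hp hpN
  have hp1 : (0:ℝ) < p - 1 := by linarith
  have hNp : (0:ℝ) < (N:ℝ) - p := by linarith
  set ω : ℝ := (volume (ball (0 : EuclideanSpace ℝ (Fin N)) 1)).toReal with hωdef
  have hω0 : 0 ≤ ω := ENNReal.toReal_nonneg
  set d : ℝ := ρ ^ (((N:ℝ)-p)/((N:ℝ)-1)) with hddef
  have hd0 : 0 < d := Real.rpow_pos_of_pos hρ _
  set b : ℝ := (p - (N:ℝ))/(p-1) - 1 with hbdef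
  have hbneg : (p - (N:ℝ))/(p-1) < 0 := div_neg_of_neg_of_pos (by linarith) hp1
  have hb : b < -1 := by rw [hbdef]; linarith
  have hb1 : b + 1 = (p - (N:ℝ))/(p-1) := by rw [hbdef]; ring
  have hb1ne : b + 1 ≠ 0 := by rw [hb1]; exact ne_of_lt hbneg
  set C : ℝ := (ω * ρ ^ ((N:ℝ)-p)) ^ (1/(p-1)) with hCdef
  have hC0 : 0 ≤ C := Real.rpow_nonneg (mul_nonneg hω0 (Real.rpow_nonneg hρ.le _)) _
  -- volume of the source ball
  have hball : volume (ball x₀ ρ) ≠ ⊤ := measure_ball_lt_top.ne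
  haveI : Nonempty (Fin N) := ⟨⟨0, by omega⟩⟩
  haveI : Nontrivial (EuclideanSpace ℝ (Fin N)) := by infer_instance
  have hvol : (volume (ball x₀ ρ)).toReal = ω * ρ ^ ((N:ℝ)) := by
    rw [Measure.addHaar_ball volume x₀ hρ.le, finrank_euclideanSpace_fin,
      ENNReal.toReal_mul, ENNReal.toReal_ofReal (by positivity),
      ← Real.rpow_natCast ρ N]
    ring
  -- value of the inner integral
  have hI : ∀ r : ℝ, (∫ y in ball x r, ρ ^ (-p) * (ball x₀ ρ).indicator (fun _ => (1:ℝ)) y)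
      = ρ ^ (-p) * (volume (ball x r ∩ ball x₀ ρ)).toReal := by
    intro r
    rw [integral_const_mul, setIntegral_indicator measurableSet_ball, setIntegral_const,
      smul_eq_mul, mul_one]
    rfl
  have hInn : ∀ r : ℝ, 0 ≤ ∫ y in ball x r,
      ρ ^ (-p) * (ball x₀ ρ).indicator (fun _ => (1:ℝ)) y := by
    intro r
    rw [hI r]
    positivity
  -- the majorant
  set h : ℝ → ℝ := fun r => (Ioi d).indicator (fun r => C * r ^ b) r with hhdef
  have hh0 : ∀ r : ℝ, 0 ≤ h r := fun r =>
    Set.indicator_nonneg (fun y hy =>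
      mul_nonneg hC0 (Real.rpow_nonneg (le_of_lt (lt_trans hd0 hy)) _)) r
  have hmono : ∀ r ∈ Ioi (0:ℝ),
      (1/r) * ((r ^ (1*p - (N:ℝ)) * ∫ y in ball x r,
        ρ ^ (-p) * (ball x₀ ρ).indicator (fun _ => (1:ℝ)) y) ^ (1/(p-1))) ≤ h r := by
    intro r hr
    rw [mem_Ioi] at hr
    rcases le_or_gt r d with hrd | hrd
    · -- small radius: balls disjoint, integrand is zero
      have hdisj : ball x r ∩ ball x₀ ρ = ∅ := by
        ext y
        simp only [mem_inter_iff, mem_ball, mem_empty_iff_false, iff_false, not_and]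
        intro h1 h2
        have ht : dist x x₀ < r + ρ := by
          calc dist x x₀ ≤ dist x y + dist y x₀ := dist_triangle _ _ _
            _ < r + ρ := by rw [dist_comm x y]; linarith
        have hxx : dist x x₀ = ‖x - x₀‖ := by rw [dist_eq_norm]
        linarith
      have hz : (∫ y in ball x r, ρ ^ (-p) * (ball x₀ ρ).indicator (fun _ => (1:ℝ)) y) = 0 := by
        rw [hI r, hdisj]; simp
      rw [hz, mul_zero, Real.zero_rpow (by positivity), mul_zero]
      exact hh0 r
    · -- large radius
      have hmem : r ∈ Ioi d := hrd
      have hrp : (0:ℝ) < r := hr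
      have hIb : (∫ y in ball x r, ρ ^ (-p) * (ball x₀ ρ).indicator (fun _ => (1:ℝ)) y)
          ≤ ω * ρ ^ ((N:ℝ) - p) := by
        rw [hI r]
        have hle : (volume (ball x r ∩ ball x₀ ρ)).toReal ≤ ω * ρ ^ ((N:ℝ)) := by
          rw [← hvol]
          exact ENNReal.toReal_mono hball (measure_mono inter_subset_right)
        calc ρ ^ (-p) * (volume (ball x r ∩ ball x₀ ρ)).toReal
            ≤ ρ ^ (-p) * (ω * ρ ^ ((N:ℝ))) :=
              mul_le_mul_of_nonneg_left hle (Real.rpow_nonneg hρ.le _)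
          _ = ω * ρ ^ ((N:ℝ) - p) := by
              rw [show (N:ℝ) - p = -p + N by ring, Real.rpow_add hρ]
              ring
      have hbase : r ^ (1*p - (N:ℝ)) * (∫ y in ball x r,
          ρ ^ (-p) * (ball x₀ ρ).indicator (fun _ => (1:ℝ)) y)
          ≤ r ^ (1*p - (N:ℝ)) * (ω * ρ ^ ((N:ℝ) - p)) :=
        mul_le_mul_of_nonneg_left hIb (Real.rpow_nonneg hrp.le _)
      have hstep : (1/r) * ((r ^ (1*p - (N:ℝ)) * (ω * ρ ^ ((N:ℝ) - p))) ^ (1/(p-1)))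
          = C * r ^ b := by
        rw [Real.mul_rpow (Real.rpow_nonneg hrp.le _)
            (mul_nonneg hω0 (Real.rpow_nonneg hρ.le _)),
          ← Real.rpow_mul hrp.le, one_div r, ← Real.rpow_neg_one r, ← mul_assoc,
          ← Real.rpow_add hrp, ← hCdef]
        rw [show (-1 : ℝ) + (1*p - (N:ℝ)) * (1/(p-1)) = b by
          rw [hbdef]; field_simp; ring]
        ring
      calc (1/r) * ((r ^ (1*p - (N:ℝ)) * ∫ y in ball x r,
            ρ ^ (-p) * (ball x₀ ρ).indicator (fun _ => (1:ℝ)) y) ^ (1/(p-1)))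
          ≤ (1/r) * ((r ^ (1*p - (N:ℝ)) * (ω * ρ ^ ((N:ℝ) - p))) ^ (1/(p-1))) := by
            apply mul_le_mul_of_nonneg_left _ (by positivity)
            exact Real.rpow_le_rpow
              (mul_nonneg (Real.rpow_nonneg hrp.le _) (hInn r)) hbase (by positivity)
        _ = C * r ^ b := hstep
        _ = h r := by rw [hhdef]; simp only [Set.indicator_of_mem hmem]
  -- integrability of the majorant
  have hint : Integrable h (volume.restrict (Ioi (0:ℝ))) := by
    have h1 : IntegrableOn (fun r : ℝ => C * r ^ b) (Ioi d) :=
      (integrableOn_Ioi_rpow_of_lt hb hd0).const_mul C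
    exact (h1.integrable_indicator measurableSet_Ioi).restrict
  -- comparison
  have hcomp : wolffTop N 1 p
      (fun y => ρ ^ (-p) * (ball x₀ ρ).indicator (fun _ => (1:ℝ)) y) x
      ≤ ∫ r in Ioi (0:ℝ), h r := by
    rw [wolffTop]
    apply integral_mono_of_nonneg _ hint
    · filter_upwards [ae_restrict_mem measurableSet_Ioi] with r hr
      exact hmono r hr
    · filter_upwards [ae_restrict_mem measurableSet_Ioi] with r hr
      rw [mem_Ioi] at hr
      exact mul_nonneg (by positivity)
        (Real.rpow_nonneg (mul_nonneg (Real.rpow_nonneg hr.le _) (hInn r)) _)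
  -- compute the integral of the majorant
  have hcalc : ∫ r in Ioi (0:ℝ), h r = C * (-d ^ (b+1) / (b+1)) := by
    rw [hhdef, setIntegral_indicator measurableSet_Ioi,
      show Ioi (0:ℝ) ∩ Ioi d = Ioi d from
        Set.inter_eq_right.mpr (fun y hy => lt_trans hd0 hy),
      integral_const_mul, integral_Ioi_rpow_of_lt hb hd0]
  -- final algebra
  have hexp : ((N:ℝ)-p)*(1/(p-1)) + (((N:ℝ)-p)/((N:ℝ)-1)) * (b+1) = ((N:ℝ)-p)/((N:ℝ)-1) := by
    rw [hb1]
    have h1 : p - 1 ≠ 0 := ne_of_gt hp1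
    have h2 : (N:ℝ) - 1 ≠ 0 := by linarith
    field_simp
    ring
  have hC' : C = ω ^ (1/(p-1)) * ρ ^ (((N:ℝ)-p)*(1/(p-1))) := by
    rw [hCdef, Real.mul_rpow hω0 (Real.rpow_nonneg hρ.le _), ← Real.rpow_mul hρ.le]
  have hd' : d ^ (b+1) = ρ ^ ((((N:ℝ)-p)/((N:ℝ)-1)) * (b+1)) := by
    rw [hddef, ← Real.rpow_mul hρ.le]
  have hmul : ρ ^ (((N:ℝ)-p)*(1/(p-1))) * ρ ^ ((((N:ℝ)-p)/((N:ℝ)-1)) * (b+1)) = d := by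
    rw [← Real.rpow_add hρ, hexp]
  have hco : -((1:ℝ)/(b+1)) = (p-1)/((N:ℝ)-p) := by
    rw [hb1]
    have h1 : p - 1 ≠ 0 := ne_of_gt hp1
    have h2 : (N:ℝ) - p ≠ 0 := ne_of_gt hNp
    have h3 : p - (N:ℝ) ≠ 0 := by intro hc; apply h2; linarith
    field_simp
    ring
  have hfin : C * (-d ^ (b+1) / (b+1)) = ((p-1)/((N:ℝ)-p)) * ω ^ (1/(p-1)) * d := by
    rw [hC', hd']
    calc ω ^ (1/(p-1)) * ρ ^ (((N:ℝ)-p)*(1/(p-1)))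
          * (-ρ ^ ((((N:ℝ)-p)/((N:ℝ)-1)) * (b+1)) / (b+1))
        = ω ^ (1/(p-1)) * (ρ ^ (((N:ℝ)-p)*(1/(p-1)))
            * ρ ^ ((((N:ℝ)-p)/((N:ℝ)-1)) * (b+1))) * (-(1/(b+1))) := by ring
      _ = ((p-1)/((N:ℝ)-p)) * ω ^ (1/(p-1)) * d := by rw [hmul, hco]; ring
  calc wolffTop N 1 p (fun y => ρ ^ (-p) * (ball x₀ ρ).indicator (fun _ => (1:ℝ)) y) x
      ≤ ∫ r in Ioi (0:ℝ), h r := hcomp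
    _ = ((p-1)/((N:ℝ)-p)) * ω ^ (1/(p-1)) * d := by rw [hcalc, hfin]
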